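/- Suppose T : [0, L] → ℝ satisfies T'(x) = -(γ/(c f))(T(x) - T_ext) on [0, L] and p : [0, L] → ℝ satisfies p(x) p'(x) = -(λ R /(2 A² d)) f |f| T(x), with constants γ, c, f, λ, R, A, d > 0. Then p(L)² - p(0)² = -(λ R/(A² d)) f |f| (T_ext L + (c f/γ)(T(0) - T(L))). -/

import Mathlib

theorem steam_pressure_drop_integrated
    (γ c f lam R A d Text L : ℝ)
    (hγ : 0 < γ) (hc : 0 < c) (hf : 0 < f) (hlam : 0 < lam) (hR : 0 < R)
    (hA : 0 < A) (hd : 0 < d) (hL : 0 ≤ L)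
    (T p T' p' : ℝ → ℝ)
    (hT : ∀ x ∈ Set.Icc (0 : ℝ) L, HasDerivAt T (T' x) x)
    (hTode : ∀ x ∈ Set.Icc (0 : ℝ) L, T' x = -(γ / (c * f)) * (T x - Text))
    (hp : ∀ x ∈ Set.Icc (0 : ℝ) L, HasDerivAt p (p' x) x)
    (hpode : ∀ x ∈ Set.Icc (0 : ℝ) L,
      p x * p' x = -(lam * R / (2 * A ^ 2 * d)) * f * |f| * T x) :
    p L ^ 2 - p 0 ^ 2 =
      -(lam * R / (A ^ 2 * d)) * f * |f| *
        (Text * L + (c * f / γ) * (T 0 - T L)) := by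
  set K : ℝ := lam * R / (A ^ 2 * d) * f * |f| with hK
  set g : ℝ → ℝ := fun x => p x ^ 2 + K * (Text * x - c * f / γ * T x) with hg
  have hderiv : ∀ x ∈ Set.Icc (0 : ℝ) L, HasDerivAt g 0 x := by
    intro x hx
    have h1 : HasDerivAt g (2 * p x * p' x + K * (Text - c * f / γ * T' x)) x := by
      have := (((hp x hx).pow 2).add
        (((hasDerivAt_id x).const_mul Text |>.sub ((hT x hx).const_mul (c * f / γ))).const_mul K))
      simpa [g, Pi.add_def, Pi.pow_def, mul_comm, mul_assoc, mul_left_comm] using this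
    have hz : 2 * p x * p' x + K * (Text - c * f / γ * T' x) = 0 := by
      have hpp := hpode x hx
      have hTT := hTode x hx
      rw [hTT]
      have hcf : c * f ≠ 0 := by positivity
      have hγ' : γ ≠ 0 := ne_of_gt hγ
      have hT' : Text - c * f / γ * (-(γ / (c * f)) * (T x - Text)) = T x := by
        field_simp
        ring
      rw [hT']
      have : 2 * (p x * p' x) = -K * T x := by
        rw [hpp, hK]
        have hA' : (A : ℝ) ≠ 0 := ne_of_gt hA
        have hd' : d ≠ 0 := ne_of_gt hd
        field_simp
      linarith [this]
    rw [← hz]; exact h1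
  have hcont : ContinuousOn g (Set.Icc 0 L) := fun x hx =>
    ((hderiv x hx).continuousAt).continuousWithinAt
  have hkey : ∀ x ∈ Set.Icc (0 : ℝ) L, g x = g 0 := by
    intro x hx
    exact constant_of_has_deriv_right_zero hcont
      (fun y hy => ((hderiv y (Set.mem_Icc_of_Ico hy)).hasDerivWithinAt)) x hx
  have hL' : g L = g 0 := hkey L ⟨hL, le_refl L⟩
  have : p L ^ 2 + K * (Text * L - c * f / γ * T L)
      = p 0 ^ 2 + K * (Text * 0 - c * f / γ * T 0) := hL'
  have hfin : p L ^ 2 - p 0 ^ 2 = -K * (Text * L + c * f / γ * (T 0 - T L)) := by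
    nlinarith [this]
  rw [hfin, hK]; ring
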